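/- arXiv:2109.04109 — 3 statements merged into one kernel-verified Lean document; each statement's English description precedes it below -/
import Mathlib

section
/- Let M̃ and Q̃ be integers with 0 ≤ Q̃ ≤ M̃ and M̃ ≥ 1, and let w_0, …, w_{M̃−1} be centered square-integrable complex random variables satisfying E[w_{l₁} · conj(w_{l₂})] = 0 for l₁ ≠ l₂, with E[|w_l|²] = 2σ_w² for 0 ≤ l < Q̃ and E[|w_l|²] = σ_w² for Q̃ ≤ l < M̃. Define W[m] = Σ_{l=0}^{M̃−1} w_l e^{−j2πlm/M̃}/√M̃. Then for every 0 ≤ m < M̃, E[|W[m]|²] = (1 + Q̃/M̃) σ_w². -/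
open MeasureTheory Complex ComplexConjugate
open scoped Real BigOperators

/-- Frequency-domain noise power after VCP folding: if the first `Q̃` time-domain noise
samples have variance `2σ_w²` and the remaining ones variance `σ_w²` (all centered and
mutually uncorrelated), then every unitary-DFT coefficient has second moment
`(1 + Q̃/M̃) σ_w²`. -/
theorem vcp_noise_dft_variance
    {Ω : Type*} [MeasurableSpace Ω] (P : Measure Ω) [IsProbabilityMeasure P]
    (Mt Qt : ℕ) (hMt : 1 ≤ Mt) (hQM : Qt ≤ Mt) (σw : ℝ)
    (w : Fin Mt → Ω → ℂ)
    (hL2 : ∀ l, MemLp (w l) 2 P)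
    (hcent : ∀ l, ∫ ω, w l ω ∂P = 0)
    (huncorr : ∀ l₁ l₂ : Fin Mt, l₁ ≠ l₂ → ∫ ω, w l₁ ω * conj (w l₂ ω) ∂P = 0)
    (hvar₁ : ∀ l : Fin Mt, (l : ℕ) < Qt → ∫ ω, (‖w l ω‖ : ℝ) ^ 2 ∂P = 2 * σw ^ 2)
    (hvar₂ : ∀ l : Fin Mt, Qt ≤ (l : ℕ) → ∫ ω, (‖w l ω‖ : ℝ) ^ 2 ∂P = σw ^ 2)
    (W : Fin Mt → Ω → ℂ)
    (hW : ∀ m ω, W m ω =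
      ∑ l : Fin Mt, w l ω * Complex.exp (-(Complex.I * 2 * π * l * m / Mt)) / Real.sqrt Mt) :
    ∀ m : Fin Mt, ∫ ω, (‖W m ω‖ : ℝ) ^ 2 ∂P = (1 + (Qt : ℝ) / Mt) * σw ^ 2 := by
  intro m
  classical
  have hMt0 : (0:ℝ) < (Mt:ℝ) := by exact_mod_cast hMt
  have key : ∀ z : ℂ, z * conj z = ((‖z‖ ^ 2 : ℝ) : ℂ) := by
    intro z
    rw [Complex.mul_conj, ← Complex.sq_norm]
  set c : Fin Mt → ℂ :=
    fun l => Complex.exp (-(Complex.I * 2 * π * l * m / Mt)) / Real.sqrt Mt with hcdef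
  have hcexp : ∀ l : Fin Mt, ‖c l‖ = 1 / Real.sqrt Mt := by
    intro l
    have h2 : ‖Complex.exp (-(Complex.I * 2 * π * l * m / Mt))‖ = 1 := by
      rw [show -(Complex.I * 2 * π * (l : Fin Mt) * (m : Fin Mt) / Mt)
          = ((-(2 * π * (l:ℕ) * (m:ℕ) / Mt) : ℝ) : ℂ) * Complex.I by push_cast; ring]
      exact Complex.norm_exp_ofReal_mul_I _
    rw [hcdef]
    simp only [norm_div, h2, Complex.norm_real, Real.norm_eq_abs]
    rw [_root_.abs_of_nonneg (Real.sqrt_nonneg (Mt:ℝ))]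
  have hcc : ∀ l : Fin Mt, c l * conj (c l) = (((Mt:ℝ)⁻¹ : ℝ) : ℂ) := by
    intro l
    rw [key, hcexp l]
    exact Complex.ofReal_inj.mpr (by
      rw [div_pow, one_pow, Real.sq_sqrt hMt0.le, one_div])
  have hint : ∀ l₁ l₂ : Fin Mt, Integrable (fun ω => w l₁ ω * conj (w l₂ ω)) P := by
    intro l₁ l₂
    have hg' : MemLp (fun ω => conj (w l₂ ω)) 2 P := by
      simpa using (hL2 l₂).inner_const (𝕜 := ℂ) (1 : ℂ)
    have := (hg'.smul (hL2 l₁) (r := 1)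
      (hpqr := ⟨by simp [one_div, ENNReal.inv_two_add_inv_two]⟩)).integrable le_rfl
    exact this
  have hWexp : ∀ ω, W m ω * conj (W m ω)
      = ∑ l₁ : Fin Mt, ∑ l₂ : Fin Mt,
          (c l₁ * conj (c l₂)) * (w l₁ ω * conj (w l₂ ω)) := by
    intro ω
    have h0 : W m ω = ∑ l : Fin Mt, w l ω * c l := by
      rw [hW m ω]
      exact Finset.sum_congr rfl fun l _ => (mul_div_assoc _ _ _)
    rw [h0, map_sum, Finset.sum_mul_sum]
    refine Finset.sum_congr rfl fun l₁ _ => Finset.sum_congr rfl fun l₂ _ => ?_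
    rw [map_mul]; ring
  have hIntegral : ∫ ω, W m ω * conj (W m ω) ∂P
      = ∑ l₁ : Fin Mt, ∑ l₂ : Fin Mt,
          (c l₁ * conj (c l₂)) * ∫ ω, w l₁ ω * conj (w l₂ ω) ∂P := by
    simp_rw [hWexp]
    rw [integral_finset_sum _ (fun l₁ _ =>
      integrable_finset_sum _ (fun l₂ _ => (hint l₁ l₂).const_mul _))]
    refine Finset.sum_congr rfl fun l₁ _ => ?_
    rw [integral_finset_sum _ (fun l₂ _ => (hint l₁ l₂).const_mul _)]
    exact Finset.sum_congr rfl fun l₂ _ => integral_const_mul _ _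
  have hdiag : ∫ ω, W m ω * conj (W m ω) ∂P
      = ∑ l : Fin Mt, (c l * conj (c l)) * ∫ ω, w l ω * conj (w l ω) ∂P := by
    rw [hIntegral]
    refine Finset.sum_congr rfl fun l₁ _ => ?_
    rw [Finset.sum_eq_single l₁]
    · intro l₂ _ h
      rw [huncorr l₁ l₂ (Ne.symm h), mul_zero]
    · intro h; exact absurd (Finset.mem_univ l₁) h
  have hsq : ∀ l : Fin Mt, ∫ ω, w l ω * conj (w l ω) ∂P
      = ((∫ ω, (‖w l ω‖ : ℝ) ^ 2 ∂P : ℝ) : ℂ) := by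
    intro l
    have h1 : ∫ ω, w l ω * conj (w l ω) ∂P = ∫ ω, ((‖w l ω‖ ^ 2 : ℝ) : ℂ) ∂P := by
      refine integral_congr_ae (Filter.Eventually.of_forall fun ω => ?_)
      simp only [key]
    rw [h1]
    exact integral_ofReal
  have hsum : ∑ l : Fin Mt, ∫ ω, (‖w l ω‖ : ℝ) ^ 2 ∂P = ((Mt:ℝ) + Qt) * σw ^ 2 := by
    have hterm : ∀ l : Fin Mt, ∫ ω, (‖w l ω‖ : ℝ) ^ 2 ∂P
        = σw ^ 2 + (if (l : ℕ) < Qt then σw ^ 2 else 0) := by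
      intro l
      by_cases h : (l : ℕ) < Qt
      · rw [hvar₁ l h, if_pos h]; ring
      · rw [hvar₂ l (le_of_not_gt h), if_neg h, add_zero]
    simp_rw [hterm]
    rw [Finset.sum_add_distrib, Finset.sum_const, Finset.card_univ, Fintype.card_fin]
    have h2 : ∑ l : Fin Mt, (if (l : ℕ) < Qt then σw ^ 2 else 0)
        = (Qt : ℝ) * σw ^ 2 := by
      rw [Fin.sum_univ_eq_sum_range (fun i => if i < Qt then σw ^ 2 else 0) Mt]
      rw [Finset.range_eq_Ico, ← Finset.sum_Ico_consecutive _ (Nat.zero_le Qt) hQM]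
      have hA : ∑ i ∈ Finset.Ico 0 Qt, (if i < Qt then σw ^ 2 else 0)
          = (Qt : ℝ) * σw ^ 2 := by
        rw [Finset.sum_congr rfl (fun i hi => if_pos (Finset.mem_Ico.mp hi).2)]
        simp [mul_comm]
      have hB : ∑ i ∈ Finset.Ico Qt Mt, (if i < Qt then σw ^ 2 else 0) = 0 := by
        rw [Finset.sum_congr rfl
          (fun i hi => if_neg (not_lt.mpr (Finset.mem_Ico.mp hi).1))]
        simp
      rw [hA, hB, add_zero]
    rw [h2]
    push_cast
    ring
  have hC : ∫ ω, W m ω * conj (W m ω) ∂P = (((1 + (Qt : ℝ) / Mt) * σw ^ 2 : ℝ) : ℂ) := by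
    rw [hdiag]
    have hterm : ∀ l : Fin Mt, (c l * conj (c l)) * ∫ ω, w l ω * conj (w l ω) ∂P
        = ((((Mt:ℝ)⁻¹ * ∫ ω, (‖w l ω‖ : ℝ) ^ 2 ∂P : ℝ)) : ℂ) := by
      intro l
      rw [hcc l, hsq l]
      push_cast
      ring
    simp_rw [hterm]
    rw [← Complex.ofReal_sum]
    rw [← Finset.mul_sum, hsum]
    congr 1
    field_simp
  have hR : ((∫ ω, (‖W m ω‖ : ℝ) ^ 2 ∂P : ℝ) : ℂ)
      = (((1 + (Qt : ℝ) / Mt) * σw ^ 2 : ℝ) : ℂ) := by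
    rw [← hC]
    have h1 : ∫ ω, W m ω * conj (W m ω) ∂P = ∫ ω, ((‖W m ω‖ ^ 2 : ℝ) : ℂ) ∂P := by
      refine integral_congr_ae (Filter.Eventually.of_forall fun ω => ?_)
      simp only [key]
    rw [h1]
    exact integral_ofReal.symm
  exact_mod_cast hR
end

section
/- Let σ_d > 0, let M̃ and Q̄ be integers with M̃ > Q̄ ≥ 0, and let (s_i)_{i∈ℕ} be centered square-integrable complex random variables with E[|s_i|²] = σ_d² for all i and E[s_{i₁} · conj(s_{i₂})] = 0 for i₁ ≠ i₂. Define the overlapping-block unitary DFT coefficients S_n[m] = Σ_{l=0}^{M̃−1} s_{n(M̃−Q̄)+l} · e^{−j2πlm/M̃}/√M̃. Then for every n ≥ 0 and every 0 ≤ m < M̃: (i) E[S_n[m] · conj(S_{n+1}[m])] = (Q̄ σ_d²/M̃) · e^{−j2π(M̃−Q̄)m/M̃}; (ii) E[|S_n[m]|²] = σ_d²; and hence (iii) the absolute correlation coefficient |E[S_n[m] · conj(S_{n+1}[m])]| / √(E[|S_n[m]|²] · E[|S_{n+1}[m]|²]) equals Q̄/M̃. -/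
open MeasureTheory Complex ComplexConjugate
open scoped Real BigOperators

/-- Two functions in L² have an integrable product. -/
lemma aux_integrable_mul_conj {Ω : Type*} [MeasurableSpace Ω] {P : Measure Ω}
    {f g : Ω → ℂ} (hf : MemLp f 2 P) (hg : MemLp g 2 P) :
    Integrable (fun ω => f ω * conj (g ω)) P := by
  have hgc : MemLp (fun ω => conj (g ω)) 2 P := by
    refine hg.of_le ?_ ?_
    · exact Complex.continuous_conj.comp_aestronglyMeasurable hg.aestronglyMeasurable
    · filter_upwards with ω
      simp
  rw [← memLp_one_iff_integrable]
  refine ⟨hf.aestronglyMeasurable.mul hgc.aestronglyMeasurable, ?_⟩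
  calc eLpNorm (fun ω => f ω * conj (g ω)) 1 P
      ≤ eLpNorm f 2 P * eLpNorm (fun ω => conj (g ω)) 2 P := by
        refine (eLpNorm_le_eLpNorm_mul_eLpNorm'_of_norm (p := 2) (q := 2) (r := 1)
          hf.aestronglyMeasurable hgc.aestronglyMeasurable (· * ·) 1 ?_ (hpqr := ⟨?_⟩)).trans
          (le_of_eq (by simp))
        · filter_upwards with ω
          simp [norm_mul]
        · simp only [one_div, inv_one]
          exact ENNReal.inv_two_add_inv_two
    _ < ⊤ := ENNReal.mul_lt_top hf.2 hgc.2

/-- Correlation of the unitary DFTs of adjacent overlapping sub-blocks (Lemma 2 /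
Appendix B of the paper): for a centered white stream `(s_i)` of power `σ_d²` and
sub-blocks of length `M̃` overlapping by `Q̄` samples, with
`S_n[m] = Σ_{l<M̃} s_{n(M̃−Q̄)+l} e^{−j2πlm/M̃}/√M̃`, one has
(i) `E[S_n[m] conj(S_{n+1}[m])] = (Q̄σ_d²/M̃)·e^{−j2π(M̃−Q̄)m/M̃}`,
(ii) `E[|S_n[m]|²] = σ_d²`, and (iii) the absolute correlation coefficient is `Q̄/M̃`. -/
theorem overlapping_block_dft_correlation
    {Ω : Type*} [MeasurableSpace Ω] (P : Measure Ω) [IsProbabilityMeasure P]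
    (Mt Qb : ℕ) (hQb : Qb < Mt) (σd : ℝ) (hσd : 0 < σd)
    (s : ℕ → Ω → ℂ)
    (hL2 : ∀ i, MemLp (s i) 2 P)
    (hcent : ∀ i, ∫ ω, s i ω ∂P = 0)
    (hvar : ∀ i, ∫ ω, (‖s i ω‖ : ℝ) ^ 2 ∂P = σd ^ 2)
    (huncorr : ∀ i₁ i₂ : ℕ, i₁ ≠ i₂ → ∫ ω, s i₁ ω * conj (s i₂ ω) ∂P = 0)
    (S : ℕ → ℕ → Ω → ℂ)
    (hS : ∀ n m ω, S n m ω = ∑ l ∈ Finset.range Mt,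
      s (n * (Mt - Qb) + l) ω * Complex.exp (-(Complex.I * 2 * π * l * m / Mt)) / Real.sqrt Mt) :
    ∀ (n : ℕ) (m : ℕ), m < Mt →
      (∫ ω, S n m ω * conj (S (n + 1) m ω) ∂P =
        (((Qb : ℝ) * σd ^ 2 / Mt : ℝ) : ℂ) *
          Complex.exp (-(Complex.I * 2 * π * ((Mt : ℂ) - (Qb : ℂ)) * m / Mt))) ∧
      (∫ ω, (‖S n m ω‖ : ℝ) ^ 2 ∂P = σd ^ 2) ∧
      (‖∫ ω, S n m ω * conj (S (n + 1) m ω) ∂P‖ /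
          Real.sqrt ((∫ ω, (‖S n m ω‖ : ℝ) ^ 2 ∂P) * ∫ ω, (‖S (n + 1) m ω‖ : ℝ) ^ 2 ∂P) =
        (Qb : ℝ) / Mt) := by
  intro n m hm
  have hMt0 : 0 < Mt := lt_of_le_of_lt (Nat.zero_le _) hQb
  have hMtR : (0:ℝ) < (Mt:ℝ) := by exact_mod_cast hMt0
  have hMtC : (Mt:ℂ) ≠ 0 := by exact_mod_cast hMt0.ne'
  -- the DFT coefficients
  set c : ℕ → ℂ := fun l => Complex.exp (-(Complex.I * 2 * π * l * m / Mt)) / Real.sqrt Mt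
    with hcdef
  have hS' : ∀ n' ω, S n' m ω = ∑ l ∈ Finset.range Mt, s (n' * (Mt - Qb) + l) ω * c l := by
    intro n' ω
    rw [hS]
    exact Finset.sum_congr rfl fun l _ => (mul_div_assoc _ _ _)
  -- correlation of the raw samples
  have hcorr : ∀ i j : ℕ, ∫ ω, s i ω * conj (s j ω) ∂P
      = if i = j then ((σd ^ 2 : ℝ) : ℂ) else 0 := by
    intro i j
    by_cases h : i = j
    · subst h
      have hpt : ∀ ω, s i ω * conj (s i ω) = ((‖s i ω‖ ^ 2 : ℝ) : ℂ) := by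
        intro ω
        rw [Complex.mul_conj]
        norm_cast
        simp [Complex.normSq_eq_norm_sq]
      calc ∫ ω, s i ω * conj (s i ω) ∂P
          = ∫ ω, ((‖s i ω‖ ^ 2 : ℝ) : ℂ) ∂P :=
            integral_congr_ae (Filter.Eventually.of_forall hpt)
        _ = ((∫ ω, (‖s i ω‖ : ℝ) ^ 2 ∂P : ℝ) : ℂ) := integral_ofReal (f := fun ω => ‖s i ω‖ ^ 2)
        _ = _ := by rw [hvar i, if_pos rfl]
    · rw [huncorr i j h, if_neg h]
  -- integrability of products of blocks terms
  have hint : ∀ i j : ℕ, Integrable (fun ω => s i ω * conj (s j ω)) P :=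
    fun i j => aux_integrable_mul_conj (hL2 i) (hL2 j)
  -- key expansion
  have key : ∀ a b : ℕ,
      (∫ ω, (∑ l ∈ Finset.range Mt, s (a + l) ω * c l) *
          conj (∑ l ∈ Finset.range Mt, s (b + l) ω * c l) ∂P)
        = ∑ l ∈ Finset.range Mt, ∑ l' ∈ Finset.range Mt,
            (if a + l = b + l' then ((σd ^ 2 : ℝ) : ℂ) else 0) * (c l * conj (c l')) := by
    intro a b
    have expand : ∀ ω, (∑ l ∈ Finset.range Mt, s (a + l) ω * c l) *
          conj (∑ l ∈ Finset.range Mt, s (b + l) ω * c l)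
        = ∑ l ∈ Finset.range Mt, ∑ l' ∈ Finset.range Mt,
            (s (a + l) ω * conj (s (b + l') ω)) * (c l * conj (c l')) := by
      intro ω
      rw [map_sum, Finset.sum_mul_sum]
      refine Finset.sum_congr rfl fun l _ => Finset.sum_congr rfl fun l' _ => ?_
      rw [map_mul]
      ring
    simp_rw [expand]
    rw [integral_finset_sum _ (fun l _ => by
      exact integrable_finset_sum _ (fun l' _ => (hint (a + l) (b + l')).mul_const _))]
    refine Finset.sum_congr rfl fun l _ => ?_
    rw [integral_finset_sum _ (fun l' _ => (hint (a + l) (b + l')).mul_const _)]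
    refine Finset.sum_congr rfl fun l' _ => ?_
    rw [integral_mul_const, hcorr]
  -- product of coefficients
  have hcc : ∀ x y : ℕ, c x * conj (c y)
      = Complex.exp (-(Complex.I * 2 * π * ((x:ℂ) - (y:ℂ)) * m / Mt)) / Mt := by
    intro x y
    simp only [hcdef]
    rw [map_div₀, ← Complex.exp_conj, Complex.conj_ofReal, div_mul_div_comm, ← Complex.exp_add,
      ← Complex.ofReal_mul, Real.mul_self_sqrt (Nat.cast_nonneg Mt)]
    congr 1
    have : conj (-(Complex.I * 2 * π * (y:ℂ) * m / Mt)) = Complex.I * 2 * π * (y:ℂ) * m / Mt := by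
      simp [map_neg, map_div₀, map_mul, map_ofNat, Complex.conj_I, Complex.conj_ofReal]
      ring
    rw [this]
    ring
  -- diagonal coefficient product
  have hcc0 : ∀ x : ℕ, c x * conj (c x) = 1 / (Mt:ℂ) := by
    intro x
    rw [hcc]
    simp
  -- (ii) for arbitrary block index
  have hvarS : ∀ n' : ℕ, ∫ ω, (‖S n' m ω‖ : ℝ) ^ 2 ∂P = σd ^ 2 := by
    intro n'
    have hdiag : ∫ ω, S n' m ω * conj (S n' m ω) ∂P = ((σd ^ 2 : ℝ) : ℂ) := by
      simp_rw [hS']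
      rw [key]
      have : ∀ l ∈ Finset.range Mt, (∑ l' ∈ Finset.range Mt,
          (if n' * (Mt - Qb) + l = n' * (Mt - Qb) + l' then ((σd ^ 2 : ℝ) : ℂ) else 0)
            * (c l * conj (c l'))) = ((σd ^ 2 : ℝ) : ℂ) / Mt := by
        intro l hl
        have h1 : ∀ l' ∈ Finset.range Mt,
            (if n' * (Mt - Qb) + l = n' * (Mt - Qb) + l' then ((σd ^ 2 : ℝ) : ℂ) else 0)
              * (c l * conj (c l'))
            = if l' = l then ((σd ^ 2 : ℝ) : ℂ) * (c l * conj (c l')) else 0 := by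
          intro l' _
          split_ifs with h2 h3 h3
          · ring
          · omega
          · omega
          · ring
        rw [Finset.sum_congr rfl h1, Finset.sum_ite_eq' (Finset.range Mt) l]
        rw [if_pos hl, hcc0]
        ring
      rw [Finset.sum_congr rfl this, Finset.sum_const, Finset.card_range, nsmul_eq_mul]
      field_simp
    have h2 : ∀ ω, S n' m ω * conj (S n' m ω) = ((‖S n' m ω‖ ^ 2 : ℝ) : ℂ) := by
      intro ω
      rw [Complex.mul_conj]
      norm_cast
      simp [Complex.normSq_eq_norm_sq]
    have h3 : ((∫ ω, (‖S n' m ω‖ : ℝ) ^ 2 ∂P : ℝ) : ℂ) = ((σd ^ 2 : ℝ) : ℂ) :=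
      calc ((∫ ω, (‖S n' m ω‖ : ℝ) ^ 2 ∂P : ℝ) : ℂ)
          = ∫ ω, ((‖S n' m ω‖ ^ 2 : ℝ) : ℂ) ∂P := (integral_ofReal (f := fun ω => ‖S n' m ω‖ ^ 2)).symm
        _ = ∫ ω, S n' m ω * conj (S n' m ω) ∂P :=
            integral_congr_ae (Filter.Eventually.of_forall fun ω => (h2 ω).symm)
        _ = ((σd ^ 2 : ℝ) : ℂ) := hdiag
    exact_mod_cast h3
  -- (i)
  have hi : ∫ ω, S n m ω * conj (S (n + 1) m ω) ∂P =
      (((Qb : ℝ) * σd ^ 2 / Mt : ℝ) : ℂ) *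
        Complex.exp (-(Complex.I * 2 * π * ((Mt : ℂ) - (Qb : ℂ)) * m / Mt)) := by
    simp_rw [hS']
    set a := n * (Mt - Qb) with ha
    set b := (n + 1) * (Mt - Qb) with hb
    have hab : b = a + (Mt - Qb) := by rw [ha, hb]; ring
    rw [key a b, Finset.sum_comm]
    set E : ℂ := Complex.exp (-(Complex.I * 2 * π * ((Mt : ℂ) - (Qb : ℂ)) * m / Mt)) / Mt
      with hE
    have hterm : ∀ l' ∈ Finset.range Mt,
        (∑ l ∈ Finset.range Mt,
          (if a + l = b + l' then ((σd ^ 2 : ℝ) : ℂ) else 0) * (c l * conj (c l')))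
        = if l' ∈ Finset.range Qb then ((σd ^ 2 : ℝ) : ℂ) * E else 0 := by
      intro l' _
      have h1 : ∀ l ∈ Finset.range Mt,
          (if a + l = b + l' then ((σd ^ 2 : ℝ) : ℂ) else 0) * (c l * conj (c l'))
          = if l = l' + (Mt - Qb) then ((σd ^ 2 : ℝ) : ℂ) * (c l * conj (c l')) else 0 := by
        intro l _
        split_ifs with h2 h3 h3
        · ring
        · omega
        · omega
        · ring
      rw [Finset.sum_congr rfl h1, Finset.sum_ite_eq' (Finset.range Mt) (l' + (Mt - Qb))]
      by_cases hq : l' < Qb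
      · rw [if_pos (by simp only [Finset.mem_range]; omega),
          if_pos (by simp only [Finset.mem_range]; exact hq)]
        congr 1
        rw [hcc, hE]
        congr 2
        push_cast [Nat.cast_sub hQb.le]
        ring
      · rw [if_neg (by simp only [Finset.mem_range]; omega),
          if_neg (by simp only [Finset.mem_range]; exact hq)]
    rw [Finset.sum_congr rfl hterm]
    rw [Finset.sum_ite_mem, Finset.inter_eq_right.mpr
      (Finset.range_subset_range.mpr hQb.le), Finset.sum_const, Finset.card_range, nsmul_eq_mul,
      hE]
    push_cast
    ring
  refine ⟨hi, hvarS n, ?_⟩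
  -- (iii)
  rw [hi, hvarS n, hvarS (n + 1), Real.sqrt_mul_self (sq_nonneg σd)]
  rw [norm_mul, Complex.norm_real, Real.norm_eq_abs]
  have hexp : -(Complex.I * 2 * π * ((Mt : ℂ) - (Qb : ℂ)) * m / Mt)
      = ((-(2 * π * ((Mt:ℝ) - (Qb:ℝ)) * (m:ℝ) / (Mt:ℝ)) : ℝ) : ℂ) * Complex.I := by
    push_cast
    ring
  rw [hexp, Complex.norm_exp_ofReal_mul_I, mul_one,
    _root_.abs_of_nonneg (by positivity : (0:ℝ) ≤ (Qb : ℝ) * σd ^ 2 / Mt)]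
  field_simp
end

section
/- Let σ > 0, let M̃ and Q̃ be integers with 1 ≤ Q̃ ≤ M̃, and let z_0, …, z_{Q̃−1} be centered square-integrable complex random variables with E[|z_l|²] = σ² for all l and E[z_{l₁} · conj(z_{l₂})] = 0 for l₁ ≠ l₂. Define Z[m] = Σ_{l=0}^{Q̃−1} z_l e^{−j2πlm/M̃}/√M̃ for integers m. Then for all integers m₁, m₂: (i) E[Z[m₁] · conj(Z[m₂])] = (σ²/M̃) · Σ_{l=0}^{Q̃−1} e^{−j2πl(m₁−m₂)/M̃}; and (ii) if sin(π(m₁−m₂)/M̃) ≠ 0, the absolute correlation coefficient |E[Z[m₁] · conj(Z[m₂])]| / √(E[|Z[m₁]|²] · E[|Z[m₂]|²]) equals |sin(πQ̃(m₁−m₂)/M̃)| / (Q̃ · |sin(π(m₁−m₂)/M̃)|). -/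
open MeasureTheory Complex ComplexConjugate
open scoped Real BigOperators

lemma abs_exp_mul_I_sub_one (θ : ℝ) :
    ‖Complex.exp ((θ : ℂ) * Complex.I) - 1‖ = 2 * |Real.sin (θ / 2)| := by
  have h1 : (Complex.exp ((θ : ℂ) * Complex.I) - 1).re = Real.cos θ - 1 := by
    simp [Complex.exp_ofReal_mul_I_re]
  have h2 : (Complex.exp ((θ : ℂ) * Complex.I) - 1).im = Real.sin θ := by
    simp [Complex.exp_ofReal_mul_I_im]
  have hs : Real.sin (θ / 2) ^ 2 = 1 / 2 - Real.cos θ / 2 := by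
    have := Real.sin_sq_eq_half_sub (θ / 2)
    rwa [show 2 * (θ / 2) = θ by ring] at this
  have hkey : (Real.cos θ - 1) ^ 2 + Real.sin θ ^ 2 = (2 * |Real.sin (θ / 2)|) ^ 2 := by
    have hpy := Real.sin_sq_add_cos_sq θ
    rw [mul_pow, _root_.sq_abs]
    nlinarith
  rw [Complex.norm_def, Complex.normSq_apply, h1, h2, ← sq, ← sq, hkey,
    Real.sqrt_sq (by positivity)]

/-- Correlation of the frequency-domain VCP interference across sub-carriers (Lemma 3 /
Appendix C of the paper): for a centered white length-`Q̃` sequence `(z_l)` of power `σ²`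
and `Z[m] = Σ_{l<Q̃} z_l e^{−j2πlm/M̃}/√M̃`, one has
(i) `E[Z[m₁] conj(Z[m₂])] = (σ²/M̃) Σ_{l<Q̃} e^{−j2πl(m₁−m₂)/M̃}`, and
(ii) if `sin(π(m₁−m₂)/M̃) ≠ 0`, the absolute correlation coefficient equals
`|sin(πQ̃(m₁−m₂)/M̃)| / (Q̃ |sin(π(m₁−m₂)/M̃)|)`. -/
theorem vcp_interference_crosscarrier_correlation
    {Ω : Type*} [MeasurableSpace Ω] (P : Measure Ω) [IsProbabilityMeasure P]
    (Mt Qt : ℕ) (hQt : 1 ≤ Qt) (hQM : Qt ≤ Mt) (σ : ℝ) (hσ : 0 < σ)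
    (z : Fin Qt → Ω → ℂ)
    (hL2 : ∀ l, MemLp (z l) 2 P)
    (hcent : ∀ l, ∫ ω, z l ω ∂P = 0)
    (hvar : ∀ l, ∫ ω, (‖z l ω‖ : ℝ) ^ 2 ∂P = σ ^ 2)
    (huncorr : ∀ l₁ l₂ : Fin Qt, l₁ ≠ l₂ → ∫ ω, z l₁ ω * conj (z l₂ ω) ∂P = 0)
    (Z : ℤ → Ω → ℂ)
    (hZ : ∀ m ω, Z m ω = ∑ l : Fin Qt,
      z l ω * Complex.exp (-(Complex.I * 2 * π * l * m / Mt)) / Real.sqrt Mt) :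
    ∀ m₁ m₂ : ℤ,
      (∫ ω, Z m₁ ω * conj (Z m₂ ω) ∂P =
        ((σ ^ 2 / Mt : ℝ) : ℂ) *
          ∑ l : Fin Qt, Complex.exp (-(Complex.I * 2 * π * l * ((m₁ : ℂ) - m₂) / Mt))) ∧
      (Real.sin (π * ((m₁ : ℝ) - m₂) / Mt) ≠ 0 →
        ‖∫ ω, Z m₁ ω * conj (Z m₂ ω) ∂P‖ /
            Real.sqrt ((∫ ω, (‖Z m₁ ω‖ : ℝ) ^ 2 ∂P) * ∫ ω, (‖Z m₂ ω‖ : ℝ) ^ 2 ∂P) =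
          |Real.sin (π * Qt * ((m₁ : ℝ) - m₂) / Mt)| /
            (Qt * |Real.sin (π * ((m₁ : ℝ) - m₂) / Mt)|)) := by
  have hM1 : 1 ≤ Mt := hQt.trans hQM
  have hMpos : (0 : ℝ) < (Mt : ℝ) := by exact_mod_cast hM1
  have hQpos : (0 : ℝ) < (Qt : ℝ) := by exact_mod_cast hQt
  -- conjugates are in L2
  have hconjL2 : ∀ l, MemLp (fun ω => conj (z l ω)) 2 P := fun l =>
    ⟨Complex.continuous_conj.comp_aestronglyMeasurable (hL2 l).1, by
      have : eLpNorm (conj (z l)) 2 P = eLpNorm (z l) 2 P := eLpNorm_conj (z l) 2 P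
      exact this ▸ (hL2 l).2⟩
  -- products are integrable
  have hint : ∀ l₁ l₂ : Fin Qt, Integrable (fun ω => z l₁ ω * conj (z l₂ ω)) P := by
    intro l₁ l₂
    have h := (hconjL2 l₂).smul (φ := z l₁) (hL2 l₁) (p := 2) (q := 2) (r := 1)
    exact memLp_one_iff_integrable.mp h
  -- diagonal second moments
  have hdiag : ∀ l, ∫ ω, z l ω * conj (z l ω) ∂P = ((σ ^ 2 : ℝ) : ℂ) := by
    intro l
    have hw : ∀ w : ℂ, w * conj w = ((‖w‖ ^ 2 : ℝ) : ℂ) := by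
      intro w
      rw [Complex.mul_conj]
      norm_cast
      rw [Complex.normSq_eq_norm_sq]
    simp_rw [hw]
    rw [← hvar l]
    exact integral_ofReal
  have hss : ((Real.sqrt Mt : ℝ) : ℂ) * ((Real.sqrt Mt : ℝ) : ℂ) = (Mt : ℂ) := by
    rw [← Complex.ofReal_mul, Real.mul_self_sqrt hMpos.le]
    norm_cast
  -- part (i), as a reusable fact
  have key : ∀ m₁ m₂ : ℤ,
      ∫ ω, Z m₁ ω * conj (Z m₂ ω) ∂P =
        ((σ ^ 2 / Mt : ℝ) : ℂ) *
          ∑ l : Fin Qt, Complex.exp (-(Complex.I * 2 * π * l * ((m₁ : ℂ) - m₂) / Mt)) := by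
    intro m₁ m₂
    have hptw : ∀ ω, Z m₁ ω * conj (Z m₂ ω) =
        ∑ l₁ : Fin Qt, ∑ l₂ : Fin Qt,
          (Complex.exp (-(Complex.I * 2 * π * l₁ * m₁ / Mt)) *
              conj (Complex.exp (-(Complex.I * 2 * π * l₂ * m₂ / Mt))) / Mt) *
            (z l₁ ω * conj (z l₂ ω)) := by
      intro ω
      rw [hZ, hZ, map_sum, Finset.sum_mul_sum]
      refine Finset.sum_congr rfl fun l₁ _ => Finset.sum_congr rfl fun l₂ _ => ?_
      rw [map_div₀, map_mul, Complex.conj_ofReal, div_mul_div_comm, hss]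
      ring
    simp only [hptw]
    rw [integral_finset_sum _ (fun l₁ _ =>
      integrable_finset_sum _ (fun l₂ _ => (hint l₁ l₂).const_mul _))]
    have hinner : ∀ l₁ : Fin Qt,
        (∫ ω, ∑ l₂ : Fin Qt,
            (Complex.exp (-(Complex.I * 2 * π * l₁ * m₁ / Mt)) *
                conj (Complex.exp (-(Complex.I * 2 * π * l₂ * m₂ / Mt))) / Mt) *
              (z l₁ ω * conj (z l₂ ω)) ∂P) =
          (Complex.exp (-(Complex.I * 2 * π * l₁ * m₁ / Mt)) *
              conj (Complex.exp (-(Complex.I * 2 * π * l₁ * m₂ / Mt))) / Mt) *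
            ((σ ^ 2 : ℝ) : ℂ) := by
      intro l₁
      rw [integral_finset_sum _ (fun l₂ _ => (hint l₁ l₂).const_mul _)]
      simp_rw [integral_const_mul]
      rw [Finset.sum_eq_single l₁]
      · rw [hdiag]
      · intro b _ hb
        rw [huncorr l₁ b (Ne.symm hb), mul_zero]
      · intro h; exact absurd (Finset.mem_univ l₁) h
    simp_rw [hinner]
    rw [Finset.mul_sum]
    refine Finset.sum_congr rfl fun l _ => ?_
    have hee : Complex.exp (-(Complex.I * 2 * π * l * m₁ / Mt)) *
        conj (Complex.exp (-(Complex.I * 2 * π * l * m₂ / Mt))) =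
        Complex.exp (-(Complex.I * 2 * π * l * ((m₁ : ℂ) - m₂) / Mt)) := by
      rw [← Complex.exp_conj, ← Complex.exp_add]
      congr 1
      simp only [map_neg, map_div₀, map_mul, Complex.conj_I, Complex.conj_ofReal,
        map_natCast, map_intCast, map_ofNat]
      ring
    rw [hee]
    push_cast
    ring
  intro m₁ m₂
  refine ⟨key m₁ m₂, fun hsin => ?_⟩
  -- second moments of Z
  have hpow : ∀ m : ℤ, ∫ ω, (‖Z m ω‖ : ℝ) ^ 2 ∂P = σ ^ 2 * Qt / Mt := by
    intro m
    have h1 := key m m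
    have h2 : ∫ ω, Z m ω * conj (Z m ω) ∂P = ((∫ ω, (‖Z m ω‖ : ℝ) ^ 2 ∂P : ℝ) : ℂ) := by
      have hw : ∀ w : ℂ, w * conj w = ((‖w‖ ^ 2 : ℝ) : ℂ) := by
        intro w
        rw [Complex.mul_conj]
        norm_cast
        rw [Complex.normSq_eq_norm_sq]
      simp_rw [hw]
      exact integral_ofReal
    rw [h2] at h1
    have h3 : ((σ ^ 2 / Mt : ℝ) : ℂ) *
        ∑ l : Fin Qt, Complex.exp (-(Complex.I * 2 * π * l * ((m : ℂ) - m) / Mt)) =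
        ((σ ^ 2 * Qt / Mt : ℝ) : ℂ) := by
      simp only [sub_self, mul_zero, zero_div, neg_zero, Complex.exp_zero]
      rw [Finset.sum_const, Finset.card_univ, Fintype.card_fin]
      push_cast
      ring
    rw [h3] at h1
    exact_mod_cast h1
  set x : ℝ := π * ((m₁ : ℝ) - m₂) / Mt with hx
  -- the geometric sum
  set a : ℂ := Complex.exp (((-(2 * x) : ℝ) : ℂ) * Complex.I) with ha
  have hterm : ∀ l : Fin Qt,
      Complex.exp (-(Complex.I * 2 * π * l * ((m₁ : ℂ) - m₂) / Mt)) = a ^ (l : ℕ) := by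
    intro l
    rw [ha, ← Complex.exp_nat_mul]
    congr 1
    rw [hx]
    push_cast
    ring
  have habs1 : ‖a - 1‖ = 2 * |Real.sin x| := by
    rw [ha, abs_exp_mul_I_sub_one]
    rw [show -(2 * x) / 2 = -x by ring, Real.sin_neg, abs_neg]
  have ha1 : a ≠ 1 := by
    intro h
    rw [h, sub_self, norm_zero] at habs1
    have : Real.sin x = 0 := by
      have h' := habs1.symm
      rw [mul_eq_zero] at h'
      rcases h' with h' | h'
      · norm_num at h'
      · exact abs_eq_zero.mp h'
    exact hsin this
  have habsQ : ‖a ^ Qt - 1‖ = 2 * |Real.sin (Qt * x)| := by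
    have hq : a ^ Qt = Complex.exp (((-(2 * (Qt * x)) : ℝ) : ℂ) * Complex.I) := by
      rw [ha, ← Complex.exp_nat_mul]
      congr 1
      push_cast
      ring
    rw [hq, abs_exp_mul_I_sub_one, show -(2 * (Qt * x)) / 2 = -(Qt * x) by ring,
      Real.sin_neg, abs_neg]
  have hax : |Real.sin x| ≠ 0 := abs_ne_zero.mpr hsin
  have hsum : ‖∑ l : Fin Qt,
      Complex.exp (-(Complex.I * 2 * π * l * ((m₁ : ℂ) - m₂) / Mt))‖ =
      |Real.sin (Qt * x)| / |Real.sin x| := by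
    simp_rw [hterm]
    rw [Fin.sum_univ_eq_sum_range (fun l => a ^ l), geom_sum_eq ha1, norm_div, habsQ, habs1]
    rw [div_eq_div_iff (by positivity) (by positivity)]
    ring
  -- put everything together
  rw [key m₁ m₂, hpow m₁, hpow m₂, norm_mul, hsum, Complex.norm_real, Real.norm_eq_abs,
    Real.sqrt_mul_self (by positivity)]
  rw [abs_of_pos (by positivity : (0:ℝ) < σ ^ 2 / Mt)]
  have hxq : π * (Qt : ℝ) * ((m₁ : ℝ) - m₂) / Mt = Qt * x := by rw [hx]; ring
  rw [hxq]
  field_simp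
end
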